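/- Let k be a squarefree product of primes pⱼ ≡ 1 (mod 8) with (pᵢ/pⱼ) = 1 for i ≠ j, let k₁ | k with k₁ = κ₁κ̄₁ for κ₁ ∈ ℤ[√2]. If π and π' are two prime elements of ℤ[√2] of the same norm pⱼ (with pⱼ ∤ k₁), then the quadratic residue symbols [κ₁/π] and [κ₁/π'] are equal; i.e. [κ₁/π] depends only on pⱼ, not on the choice of prime above pⱼ. -/

import Mathlib

namespace Stmt9Aux
open Zsqrtd

lemma norm_dvd_of_dvd {a b : Zsqrtd 2} (h : a ∣ b) : a.norm ∣ b.norm := by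
  obtain ⟨c, rfl⟩ := h
  rw [Zsqrtd.norm_mul]
  exact dvd_mul_right _ _

lemma star_dvd_iff {a b : Zsqrtd 2} : star a ∣ b ↔ a ∣ star b := by
  constructor
  · rintro ⟨c, rfl⟩; exact ⟨star c, by rw [star_mul, star_star, mul_comm]⟩
  · rintro ⟨c, hc⟩
    exact ⟨star c, by rw [← star_star b, hc, star_mul, mul_comm]⟩

lemma star_prime {π : Zsqrtd 2} (hπ : Prime π) : Prime (star π) := by
  refine ⟨by simpa [star_eq_zero] using hπ.1, by simpa [isUnit_star] using hπ.2.1, ?_⟩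
  intro a b h
  rw [star_dvd_iff] at h
  rw [star_mul, mul_comm] at h
  rcases hπ.2.2 _ _ h with h' | h' <;> [left; right] <;>
    · rw [star_dvd_iff]; exact h'

lemma not_dvd_star {π : Zsqrtd 2} {p : ℕ} (hp : p.Prime) (hodd : p % 2 = 1)
    (hn : π.norm = (p : ℤ)) : ¬ π ∣ star π := by
  intro h
  have hpI : Prime (p : ℤ) := Nat.prime_iff_prime_int.mp hp
  have hp2 : ¬ ((p:ℤ) ∣ 2) := by
    intro h'
    have : p ∣ 2 := by exact_mod_cast h'
    have h2le := hp.two_le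
    rcases (Nat.prime_two.eq_one_or_self_of_dvd p this) with h'' | h'' <;> omega
  have h2 : π ∣ ((2 * π.re : ℤ) : Zsqrtd 2) := by
    have := dvd_add h (dvd_refl π)
    have he : star π + π = ((2 * π.re : ℤ) : Zsqrtd 2) := by
      ext <;> simp [Zsqrtd.re_star, Zsqrtd.im_star] <;> ring
    rwa [he] at this
  have h3 : π ∣ (⟨0, 2 * π.im⟩ : Zsqrtd 2) := by
    have := dvd_sub (dvd_refl π) h
    have he : π - star π = (⟨0, 2 * π.im⟩ : Zsqrtd 2) := by
      ext <;> simp [Zsqrtd.re_star, Zsqrtd.im_star] <;> ring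
    rwa [he] at this
  have hx : (p : ℤ) ∣ π.re := by
    have h4 := norm_dvd_of_dvd h2
    rw [hn, Zsqrtd.norm_intCast] at h4
    have h5 : (p : ℤ) ∣ 2 * (2 * (π.re * π.re)) := by
      refine dvd_trans h4 (dvd_of_eq ?_); ring
    rcases hpI.dvd_mul.1 h5 with h' | h'
    · exact absurd h' hp2
    rcases hpI.dvd_mul.1 h' with h' | h'
    · exact absurd h' hp2
    exact (hpI.dvd_mul.1 h').elim id id
  have hy : (p : ℤ) ∣ π.im := by
    have h4 := norm_dvd_of_dvd h3
    rw [hn] at h4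
    have h5 : (p : ℤ) ∣ 2 * (2 * (2 * (π.im * π.im))) := by
      rcases h4 with ⟨c, hc⟩
      refine ⟨-c, ?_⟩
      rw [Zsqrtd.norm_def] at hc
      simp only at hc
      linarith
    rcases hpI.dvd_mul.1 h5 with h' | h'
    · exact absurd h' hp2
    rcases hpI.dvd_mul.1 h' with h' | h'
    · exact absurd h' hp2
    rcases hpI.dvd_mul.1 h' with h' | h'
    · exact absurd h' hp2
    exact (hpI.dvd_mul.1 h').elim id id
  have key : (p : ℤ) * p ∣ π.re * π.re - 2 * π.im * π.im := by
    refine dvd_sub (mul_dvd_mul hx hx) ?_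
    rw [mul_assoc]
    exact (mul_dvd_mul hy hy).mul_left 2
  rw [← Zsqrtd.norm_def, hn] at key
  have h2le : (2:ℤ) ≤ p := by exact_mod_cast hp.two_le
  have := Int.le_of_dvd (by omega) key
  nlinarith


lemma dvd_int {π : Zsqrtd 2} {p : ℕ} (hπ : Prime π) (hp : p.Prime) (hodd : p % 2 = 1)
    (hn : π.norm = (p : ℤ)) {m : ℤ} (h : π ∣ (m : Zsqrtd 2)) : (p : ℤ) ∣ m := by
  have hns := not_dvd_star hp hodd hn
  have hsd : star π ∣ (m : Zsqrtd 2) := by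
    rw [star_dvd_iff]
    simpa using h
  obtain ⟨w, hw⟩ := h
  rw [hw] at hsd
  have hsp := star_prime hπ
  rcases hsp.2.2 _ _ hsd with h' | h'
  · exact absurd (star_dvd_iff.mp h') (by simpa using hns)
  · have : ((p:ℤ) : Zsqrtd 2) ∣ (m : Zsqrtd 2) := by
      rw [← hn, Zsqrtd.norm_eq_mul_conj, hw]
      exact mul_dvd_mul_left π h'
    exact_mod_cast (Zsqrtd.intCast_dvd_intCast _ _).mp this

lemma pi_dvd_p {π : Zsqrtd 2} {p : ℕ} (hn : π.norm = (p : ℤ)) :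
    π ∣ ((p : ℤ) : Zsqrtd 2) := by
  rw [← hn, Zsqrtd.norm_eq_mul_conj]
  exact dvd_mul_right _ _

lemma exists_c {π : Zsqrtd 2} {p : ℕ} (hπ : Prime π) (hp : p.Prime) (hodd : p % 2 = 1)
    (hn : π.norm = (p : ℤ)) :
    ∃ c : ℤ, π ∣ Zsqrtd.sqrtd - (c : Zsqrtd 2) ∧ (p : ℤ) ∣ c ^ 2 - 2 := by
  haveI : Fact p.Prime := ⟨hp⟩
  set x := π.re with hxd
  set y := π.im with hyd
  have hpy : ¬ (p:ℤ) ∣ y := by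
    intro hdy
    have hdx : (p:ℤ) ∣ x := by
      have h1 : (p:ℤ) ∣ x * x := by
        have : x * x = π.norm + 2 * y * y := by rw [Zsqrtd.norm_def]; ring
        rw [this, hn]
        exact dvd_add (dvd_refl _) ((hdy.mul_left _).mul_right _)
      exact ((Nat.prime_iff_prime_int.mp hp).dvd_mul.1 h1).elim id id
    have key : (p : ℤ) * p ∣ π.norm := by
      rw [Zsqrtd.norm_def]
      refine dvd_sub (mul_dvd_mul hdx hdx) ?_
      rw [mul_assoc]
      exact (mul_dvd_mul hdy hdy).mul_left 2
    rw [hn] at key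
    have h2le : (2:ℤ) ≤ p := by exact_mod_cast hp.two_le
    have := Int.le_of_dvd (by omega) key
    nlinarith
  -- inverse z of y mod p
  have hy0 : ((y : ZMod p) : ZMod p) ≠ 0 := by
    rwa [Ne, ZMod.intCast_zmod_eq_zero_iff_dvd]
  obtain ⟨z, hz⟩ : ∃ z : ℤ, (p:ℤ) ∣ y * z - 1 := by
    refine ⟨((y : ZMod p)⁻¹).val, ?_⟩
    rw [← ZMod.intCast_zmod_eq_zero_iff_dvd]
    push_cast
    rw [ZMod.natCast_val, ZMod.cast_id]
    rw [mul_inv_cancel₀ hy0]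
    ring
  have hdvd : π ∣ Zsqrtd.sqrtd - ((-x * z : ℤ) : Zsqrtd 2) := by
    have heq : Zsqrtd.sqrtd - ((-x * z : ℤ) : Zsqrtd 2) =
        (z : Zsqrtd 2) * π + ((1 - y * z : ℤ) : Zsqrtd 2) * Zsqrtd.sqrtd := by
      ext <;> simp <;> ring
    rw [heq]
    refine dvd_add (Dvd.dvd.mul_left (dvd_refl π) _) ?_
    refine Dvd.dvd.mul_right ?_ _
    calc π ∣ ((p : ℤ) : Zsqrtd 2) := pi_dvd_p hn
      _ ∣ ((1 - y * z : ℤ) : Zsqrtd 2) := by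
          rw [Zsqrtd.intCast_dvd_intCast]
          exact dvd_sub_comm.mp hz
  refine ⟨-x * z, hdvd, ?_⟩
  have h2 : π ∣ ((2 - (-x * z) ^ 2 : ℤ) : Zsqrtd 2) := by
    have heq : ((2 - (-x * z) ^ 2 : ℤ) : Zsqrtd 2) =
        (Zsqrtd.sqrtd - ((-x * z : ℤ) : Zsqrtd 2)) * (Zsqrtd.sqrtd + ((-x * z : ℤ) : Zsqrtd 2)) := by
      ext <;> simp [Zsqrtd.re_mul, Zsqrtd.im_mul, pow_two] <;> ring
    rw [heq]
    exact hdvd.mul_right _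
  exact dvd_sub_comm.mp (dvd_int hπ hp hodd hn h2)


/-- The fundamental congruence: every element is congruent to an integer mod π. -/
lemma elt_congr {π : Zsqrtd 2} {c : ℤ} (hc : π ∣ Zsqrtd.sqrtd - (c : Zsqrtd 2)) (α : Zsqrtd 2) :
    π ∣ α - ((α.re + α.im * c : ℤ) : Zsqrtd 2) := by
  have heq : α - ((α.re + α.im * c : ℤ) : Zsqrtd 2) =
      (α.im : Zsqrtd 2) * (Zsqrtd.sqrtd - (c : Zsqrtd 2)) := by
    ext <;> simp <;> ring
  rw [heq]
  exact hc.mul_left _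

lemma qr_iff {π : Zsqrtd 2} {p : ℕ} (hπ : Prime π) (hp : p.Prime) (hodd : p % 2 = 1)
    (hn : π.norm = (p : ℤ)) {c : ℤ} (hc : π ∣ Zsqrtd.sqrtd - (c : Zsqrtd 2)) (α : Zsqrtd 2) :
    (∃ τ : Zsqrtd 2, π ∣ α - τ ^ 2) ↔ IsSquare ((α.re + α.im * c : ℤ) : ZMod p) := by
  haveI : Fact p.Prime := ⟨hp⟩
  constructor
  · rintro ⟨τ, hτ⟩
    set t : ℤ := τ.re + τ.im * c with ht
    have h1 : π ∣ τ - (t : Zsqrtd 2) := elt_congr hc τ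
    have h2 : π ∣ τ ^ 2 - ((t : Zsqrtd 2)) ^ 2 := by
      have : τ ^ 2 - ((t : Zsqrtd 2)) ^ 2 = (τ - t) * (τ + t) := by ring
      rw [this]
      exact h1.mul_right _
    have h3 : π ∣ α - ((α.re + α.im * c : ℤ) : Zsqrtd 2) := elt_congr hc α
    have h4 : π ∣ (((α.re + α.im * c) - t ^ 2 : ℤ) : Zsqrtd 2) := by
      have : (((α.re + α.im * c) - t ^ 2 : ℤ) : Zsqrtd 2) =
          (α - τ ^ 2) + (τ ^ 2 - ((t : Zsqrtd 2)) ^ 2) - (α - ((α.re + α.im * c : ℤ) : Zsqrtd 2)) := by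
        push_cast
        ring
      rw [this]
      exact dvd_sub (dvd_add hτ h2) h3
    have h5 := dvd_int hπ hp hodd hn h4
    have h6 : (((α.re + α.im * c) - t ^ 2 : ℤ) : ZMod p) = 0 := by
      rwa [ZMod.intCast_zmod_eq_zero_iff_dvd]
    refine ⟨((t : ZMod p)), ?_⟩
    push_cast at h6 ⊢
    linear_combination h6
  · rintro ⟨s, hs⟩
    obtain ⟨t, rfl⟩ := ZMod.intCast_surjective s
    have h5 : (p : ℤ) ∣ (α.re + α.im * c) - t ^ 2 := by
      rw [← ZMod.intCast_zmod_eq_zero_iff_dvd]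
      push_cast at hs ⊢
      linear_combination hs
    refine ⟨(t : Zsqrtd 2), ?_⟩
    have : α - ((t : Zsqrtd 2)) ^ 2 =
        (α - ((α.re + α.im * c : ℤ) : Zsqrtd 2)) + (((α.re + α.im * c) - t ^ 2 : ℤ) : Zsqrtd 2) := by
      push_cast
      ring
    rw [this]
    refine dvd_add (elt_congr hc α) ?_
    exact (pi_dvd_p hn).trans (by rwa [Zsqrtd.intCast_dvd_intCast])

lemma square_iff_of_mul_square {p : ℕ} [Fact p.Prime] {a b : ZMod p}
    (ha : a ≠ 0) (hb : b ≠ 0) (hab : IsSquare (a * b)) : (IsSquare a ↔ IsSquare b) := by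
  have key : ∀ x y : ZMod p, x ≠ 0 → IsSquare (x * y) → IsSquare x → IsSquare y := by
    rintro x y hx ⟨t, ht⟩ ⟨s, hs⟩
    have hs0 : s ≠ 0 := by rintro rfl; simp at hs; exact hx hs
    refine ⟨t * s⁻¹, ?_⟩
    field_simp
    rw [sq t, ← ht, hs]
    ring
  exact ⟨key a b ha hab, key b a hb (by rwa [mul_comm]) ⟩

lemma isSquare_of_primes {p : ℕ} [Fact p.Prime] :
    ∀ d : ℕ, d ≠ 0 → (∀ q : ℕ, q.Prime → q ∣ d → IsSquare ((q : ZMod p))) →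
      IsSquare ((d : ZMod p)) := by
  intro d
  induction d using Nat.strong_induction_on with
  | _ d ih =>
    intro hd0 hq
    rcases eq_or_ne d 1 with rfl | hd1
    · exact ⟨1, by norm_num⟩
    have hpf : d.minFac.Prime := Nat.minFac_prime hd1
    have hdvd : d.minFac ∣ d := Nat.minFac_dvd d
    have hlt : d / d.minFac < d := Nat.div_lt_self (Nat.pos_of_ne_zero hd0) hpf.one_lt
    have h1 : IsSquare ((d.minFac : ZMod p)) := hq _ hpf hdvd
    have h2 : IsSquare (((d / d.minFac : ℕ) : ZMod p)) := by
      refine ih _ hlt ?_ ?_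
      · intro h
        rw [Nat.div_eq_zero_iff, or_iff_right (Nat.Prime.ne_zero hpf)] at h
        exact absurd (Nat.le_of_dvd (Nat.pos_of_ne_zero hd0) hdvd) (by omega)
      · intro q hqp hqd
        exact hq q hqp (hqd.trans (Nat.div_dvd_of_dvd hdvd))
    have : (d : ZMod p) = (d.minFac : ZMod p) * ((d / d.minFac : ℕ) : ZMod p) := by
      rw [← Nat.cast_mul, Nat.mul_div_cancel' hdvd]
    rw [this]
    exact h1.mul h2

end Stmt9Aux

open Classical in
/-- The quadratic residue symbol `[α/π]`: `1` if `α` is a square modulo `π`, `-1` otherwise. -/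
noncomputable def qr {R : Type*} [CommRing R] (α π : R) : ℤ :=
  if ∃ τ : R, π ∣ α - τ ^ 2 then 1 else -1

/-- Let `k` be a squarefree product of primes `pⱼ ≡ 1 (mod 8)` with `(pᵢ/pⱼ) = 1` for `i ≠ j`,
and let `k₁ ∣ k` with `k₁ = κ₁κ̄₁`, `κ₁ ∈ ℤ[√2]`. If `π, π'` are primes of `ℤ[√2]` of the same
norm `p ∣ k` with `p ∤ k₁`, then `[κ₁/π] = [κ₁/π']`. -/
theorem stmt9 (k : ℕ) (hsq : Squarefree k)
    (h8 : ∀ p : ℕ, p.Prime → p ∣ k → p % 8 = 1)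
    (hleg : ∀ p q : ℕ, p.Prime → q.Prime → p ∣ k → q ∣ k → p ≠ q → jacobiSym p q = 1)
    (k₁ : ℕ) (hk₁ : k₁ ∣ k) (κ₁ : Zsqrtd 2) (hκ : κ₁ * star κ₁ = (k₁ : Zsqrtd 2))
    (p : ℕ) (hp : p.Prime) (hpk : p ∣ k) (hpk₁ : ¬p ∣ k₁)
    (π π' : Zsqrtd 2) (hπ : Prime π) (hπ' : Prime π')
    (hn : π.norm = (p : ℤ)) (hn' : π'.norm = (p : ℤ)) :
    qr κ₁ π = qr κ₁ π' := by

  have hodd : p % 2 = 1 := by have := h8 p hp hpk; omega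
  haveI : Fact p.Prime := ⟨hp⟩
  have hκnorm : κ₁.norm = (k₁ : ℤ) := by
    have h1 : ((κ₁.norm : ℤ) : Zsqrtd 2) = (((k₁ : ℤ)) : Zsqrtd 2) := by
      rw [Zsqrtd.norm_eq_mul_conj, hκ]
      push_cast
      ring
    exact_mod_cast h1
  obtain ⟨c, hc, hc2⟩ := Stmt9Aux.exists_c hπ hp hodd hn
  obtain ⟨c', hc', hc2'⟩ := Stmt9Aux.exists_c hπ' hp hodd hn'
  set a : ℤ := κ₁.re + κ₁.im * c with ha
  set a' : ℤ := κ₁.re + κ₁.im * c' with ha'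
  -- π does not divide κ₁
  have hnd : ¬ π ∣ κ₁ := by
    intro h
    have h1 := Stmt9Aux.norm_dvd_of_dvd h
    rw [hn, hκnorm] at h1
    exact hpk₁ (by exact_mod_cast h1)
  have hnd' : ¬ π' ∣ κ₁ := by
    intro h
    have h1 := Stmt9Aux.norm_dvd_of_dvd h
    rw [hn', hκnorm] at h1
    exact hpk₁ (by exact_mod_cast h1)
  -- the residues are nonzero
  have ha0 : ∀ (ρ : Zsqrtd 2) (b : ℤ), Prime ρ → ρ.norm = (p:ℤ) →
      ρ ∣ Zsqrtd.sqrtd - (b : Zsqrtd 2) → ¬ ρ ∣ κ₁ →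
      (((κ₁.re + κ₁.im * b : ℤ)) : ZMod p) ≠ 0 := by
    intro ρ b hρ hρn hb hρd h0
    rw [ZMod.intCast_zmod_eq_zero_iff_dvd] at h0
    have h1 : ρ ∣ ((κ₁.re + κ₁.im * b : ℤ) : Zsqrtd 2) :=
      (Stmt9Aux.pi_dvd_p hρn).trans (by rwa [Zsqrtd.intCast_dvd_intCast])
    have h2 : ρ ∣ κ₁ := by
      have h3 := Stmt9Aux.elt_congr hb κ₁
      have : κ₁ = (κ₁ - ((κ₁.re + κ₁.im * b : ℤ) : Zsqrtd 2)) +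
          ((κ₁.re + κ₁.im * b : ℤ) : Zsqrtd 2) := by ring
      rw [this]
      exact dvd_add h3 h1
    exact hρd h2
  have hA0 : ((a : ZMod p)) ≠ 0 := ha0 π c hπ hn hc hnd
  have hA0' : ((a' : ZMod p)) ≠ 0 := ha0 π' c' hπ' hn' hc' hnd'
  -- k₁ is a nonzero square mod p
  have hk0 : k ≠ 0 := by
    intro h
    subst h
    exact (Nat.prime_two).not_isUnit (hsq 2 (dvd_zero _))
  have hk₁0 : k₁ ≠ 0 := by
    intro h
    subst h
    exact hk0 (Nat.eq_zero_of_zero_dvd hk₁)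
  have hk₁sq : IsSquare ((k₁ : ℕ) : ZMod p) := by
    refine Stmt9Aux.isSquare_of_primes k₁ hk₁0 ?_
    intro q hq hqk₁
    have hqk : q ∣ k := hqk₁.trans hk₁
    have hqp : q ≠ p := by
      rintro rfl
      exact hpk₁ hqk₁
    have hj : jacobiSym (q : ℤ) p = 1 := hleg q p hq hp hqk hpk hqp
    have hl : legendreSym p (q : ℤ) = 1 := by
      rw [jacobiSym.legendreSym.to_jacobiSym]
      exact hj
    have hq0 : (((q : ℤ)) : ZMod p) ≠ 0 := by
      rw [Ne, ZMod.intCast_zmod_eq_zero_iff_dvd]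
      intro h
      have : p ∣ q := by exact_mod_cast h
      exact hqp ((Nat.prime_dvd_prime_iff_eq hp hq).mp this).symm
    have := (legendreSym.eq_one_iff p hq0).mp hl
    have hcast : (((q : ℤ)) : ZMod p) = ((q : ℕ) : ZMod p) := by push_cast; ring
    rwa [hcast] at this
  have hk₁sq' : IsSquare (((k₁ : ℤ)) : ZMod p) := by
    have hcast : (((k₁ : ℤ)) : ZMod p) = ((k₁ : ℕ) : ZMod p) := by push_cast; ring
    rwa [hcast]
  -- c and c' satisfy c² = 2 mod p
  have hcz : ((c : ZMod p)) ^ 2 = 2 := by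
    have : ((c ^ 2 - 2 : ℤ) : ZMod p) = 0 := by
      rw [ZMod.intCast_zmod_eq_zero_iff_dvd]; exact hc2
    push_cast at this
    linear_combination this
  have hcz' : ((c' : ZMod p)) ^ 2 = 2 := by
    have : ((c' ^ 2 - 2 : ℤ) : ZMod p) = 0 := by
      rw [ZMod.intCast_zmod_eq_zero_iff_dvd]; exact hc2'
    push_cast at this
    linear_combination this
  -- c' = ± c mod p
  have hcc : ((c' : ZMod p)) = c ∨ ((c' : ZMod p)) = -(c : ZMod p) := by
    have h1 : (((c' : ZMod p)) - c) * (((c' : ZMod p)) + c) = 0 := by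
      linear_combination hcz' - hcz
    rcases mul_eq_zero.mp h1 with h | h
    · left; linear_combination h
    · right; linear_combination h
  -- norms over ℤ
  have hnorm_int : κ₁.re * κ₁.re - 2 * (κ₁.im * κ₁.im) = (k₁ : ℤ) := by
    rw [← hκnorm, Zsqrtd.norm_def]; ring
  -- key equivalence
  have key : IsSquare ((a : ZMod p)) ↔ IsSquare ((a' : ZMod p)) := by
    rcases hcc with h | h
    · have : ((a' : ZMod p)) = ((a : ZMod p)) := by
        rw [ha, ha']
        push_cast
        rw [h]
      rw [this]
    · refine Stmt9Aux.square_iff_of_mul_square hA0 hA0' ?_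
      have hprod : ((a : ZMod p)) * ((a' : ZMod p)) = (((k₁ : ℤ)) : ZMod p) := by
        rw [ha, ha']
        push_cast
        rw [h]
        have h2 := congrArg (fun z : ℤ => ((z : ZMod p))) hnorm_int
        push_cast at h2
        linear_combination h2 - (κ₁.im : ZMod p) * κ₁.im * hcz
      rw [hprod]
      exact hk₁sq'
  -- conclude
  have hiff : (∃ τ : Zsqrtd 2, π ∣ κ₁ - τ ^ 2) ↔ (∃ τ : Zsqrtd 2, π' ∣ κ₁ - τ ^ 2) := by
    rw [Stmt9Aux.qr_iff hπ hp hodd hn hc κ₁, Stmt9Aux.qr_iff hπ' hp hodd hn' hc' κ₁]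
    exact key
  classical
  unfold qr
  exact if_congr hiff rfl rfl
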